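/- Under these hypotheses, the function Ψ satisfies, for every x ≥ d, the equation (g(x) − u₀)·Ψ'(x) − (λ+δ)·Ψ(x) + λ·∫₀ˣ Ψ(x−y)·α·e^{−α·y} dy + u₀ = 0, where at x = d the derivative Ψ'(d) equals 1. -/

import Mathlib

open intervalIntegral Set Filter Topology

lemma aux_exp_deriv (c x : ℝ) : HasDerivAt (fun t => Real.exp (c * t)) (c * Real.exp (c * x)) x := by
  have h : HasDerivAt (fun t : ℝ => c * t) c x := by
    simpa using (hasDerivAt_id x).const_mul c
  simpa [mul_comm] using h.exp

lemma aux_sub (al : ℝ) (f : ℝ → ℝ) (x : ℝ) :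
    (∫ y in (0:ℝ)..x, f (x - y) * (al * Real.exp (-al * y)))
      = al * Real.exp (-al * x) * ∫ z in (0:ℝ)..x, f z * Real.exp (al * z) := by
  have h1 := intervalIntegral.integral_comp_sub_left (a := (0:ℝ)) (b := x)
      (fun z => f z * (al * Real.exp (-al * (x - z)))) x
  simp only [sub_sub_cancel, sub_zero, sub_self] at h1
  rw [h1, ← intervalIntegral.integral_const_mul]
  refine intervalIntegral.integral_congr fun z _ => ?_
  have h2 : -al * (x - z) = -al * x + al * z := by ring
  rw [h2, Real.exp_add]
  ring

lemma aux_expint (al b : ℝ) :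
    ∫ y in (0:ℝ)..b, al * Real.exp (-al * y) = 1 - Real.exp (-al * b) := by
  have h : ∀ y ∈ Set.uIcc (0:ℝ) b,
      HasDerivAt (fun t => -Real.exp (-al * t)) (al * Real.exp (-al * y)) y := by
    intro y _
    have : HasDerivAt (fun t => -Real.exp (-al * t)) (-(-al * Real.exp (-al * y))) y :=
      (aux_exp_deriv (-al) y).neg
    convert this using 1
    ring
  have hint : IntervalIntegrable (fun y => al * Real.exp (-al * y)) MeasureTheory.volume 0 b :=
    (continuous_const.mul (Real.continuous_exp.comp (continuous_const.mul continuous_id))).intervalIntegrable _ _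
  rw [intervalIntegral.integral_eq_sub_of_hasDerivAt h hint]
  have h0 : -al * (0:ℝ) = 0 := by ring
  simp only [h0, Real.exp_zero]
  ring

lemma aux_deriv_nonneg {f : ℝ → ℝ} {D x : ℝ} (hx : (0:ℝ) ≤ x)
    (hf : HasDerivAt f D x) (hmono : StrictMonoOn f (Set.Ici 0)) : 0 ≤ D := by
  have h := (hf.hasDerivWithinAt (s := Set.Ioi x))
  rw [hasDerivWithinAt_iff_tendsto_slope' (notMem_Ioi.2 le_rfl)] at h
  refine ge_of_tendsto h ?_
  filter_upwards [eventually_mem_nhdsWithin] with y hy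
  rw [slope_def_field]
  have hxy : x < y := hy
  refine div_nonneg (sub_nonneg.2 (le_of_lt (hmono hx (le_trans hx hxy.le) hxy))) (by linarith)

lemma aux_neg_right {f : ℝ → ℝ} {D x : ℝ} (hf : HasDerivAt f D x) (hD : D < 0) (hfx : f x = 0) :
    ∃ y, x < y ∧ f y < 0 := by
  have h := hasDerivAt_iff_tendsto_slope.mp hf
  have h2 : Tendsto (slope f x) (𝓝[>] x) (𝓝 D) :=
    h.mono_left (nhdsWithin_mono _ (fun y hy => by
      simp only [Set.mem_compl_iff, Set.mem_singleton_iff]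
      exact ne_of_gt hy))
  have h3 : ∀ᶠ y in 𝓝[>] x, slope f x y < 0 := h2.eventually_lt_const hD
  obtain ⟨y, hy1, hy2⟩ := (h3.and eventually_mem_nhdsWithin).exists
  refine ⟨y, hy2, ?_⟩
  rw [slope_def_field, hfx, sub_zero] at hy1
  by_contra hc
  exact absurd hy1 (not_lt.2 (div_nonneg (not_lt.1 hc) (by linarith [Set.mem_Ioi.1 hy2])))

/-- Under the hypotheses of Theorem 3.3 (Hypothesis A plus the matching
condition), the value-function candidate Ψ satisfies, for every x ≥ d,
(g(x) − u₀)·Ψ'(x) − (λ+δ)·Ψ(x) + λ·∫₀ˣ Ψ(x−y)·α·e^{−αy} dy + u₀ = 0, where at x = d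
the derivative Ψ'(d) = ψ₂'(d)/ψ₂'(d) equals 1. -/
theorem stmt_8 (lam del al u0 d : ℝ)
    (g g' ψ₁ ψ₁' ψ₂ ψ₂' ψ₂'' Ψ : ℝ → ℝ)
    (hlam : 0 < lam) (hdel : 0 < del) (hal : 0 < al) (hu0 : 0 < u0)
    (hg : ∀ x ≥ (0:ℝ), HasDerivAt g (g' x) x)
    (hg'c : ContinuousOn g' (Set.Ici 0))
    (hgu : ∀ x ≥ (0:ℝ), u0 < g x)
    (hψ₁d : ∀ x ≥ (0:ℝ), HasDerivAt ψ₁ (ψ₁' x) x)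
    (hψ₁'c : ContinuousOn ψ₁' (Set.Ici 0))
    (hψ₁mono : StrictMonoOn ψ₁ (Set.Ici 0))
    (hψ₁eq : ∀ x > (0:ℝ),
      g x * ψ₁' x - (lam + del) * ψ₁ x
        + lam * ∫ y in (0:ℝ)..x, ψ₁ (x - y) * (al * Real.exp (-al * y)) = 0)
    (hψ₂bdd : ∃ M : ℝ, ∀ x ≥ (0:ℝ), |ψ₂ x| ≤ M)
    (hψ₂d : ∀ x ≥ (0:ℝ), HasDerivAt ψ₂ (ψ₂' x) x)
    (hψ₂d2 : ∀ x ≥ (0:ℝ), HasDerivAt ψ₂' (ψ₂'' x) x)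
    (hψ₂''c : ContinuousOn ψ₂'' (Set.Ici 0))
    (hψ₂conc : ConcaveOn ℝ (Set.Ici 0) ψ₂)
    (hψ₂eq : ∀ x > (0:ℝ),
      (g x - u0) * ψ₂'' x + (al * (g x - u0) + g' x - (lam + del)) * ψ₂' x
        - al * del * ψ₂ x = 0)
    (hd : 0 < d) (hψ₂'d : 0 < ψ₂' d)
    (hmatch : ψ₁ d / ψ₁' d - ψ₂ d / ψ₂' d = u0 / del)
    (hΨ : ∀ x, Ψ x = if x < d then ψ₁ x / ψ₁' d else u0 / del + ψ₂ x / ψ₂' d) :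
    ∀ x ≥ d,
      HasDerivAt Ψ (ψ₂' x / ψ₂' d) x ∧
      (g x - u0) * (ψ₂' x / ψ₂' d) - (lam + del) * Ψ x
        + lam * (∫ y in (0:ℝ)..x, Ψ (x - y) * (al * Real.exp (-al * y))) + u0 = 0 := by
  have hd0 : (0:ℝ) ≤ d := hd.le
  have hc₂ : ψ₂' d ≠ 0 := ne_of_gt hψ₂'d
  have hψ₁cont : ContinuousOn ψ₁ (Set.Ici 0) :=
    fun x hx => ((hψ₁d x hx).continuousAt).continuousWithinAt
  set K₁ : ℝ → ℝ := fun u => ∫ z in (0:ℝ)..u, ψ₁ z * Real.exp (al * z) with hK₁def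
  have hψ₁eq' : ∀ x > (0:ℝ),
      g x * ψ₁' x = (lam + del) * ψ₁ x - lam * (al * Real.exp (-al * x) * K₁ x) := by
    intro x hx
    have h0 := hψ₁eq x hx
    rw [aux_sub al ψ₁ x] at h0
    linarith
  have hK₁deriv : ∀ x > (0:ℝ), HasDerivAt K₁ (ψ₁ x * Real.exp (al * x)) x := by
    intro x hx
    have hfc : ContinuousOn (fun z => ψ₁ z * Real.exp (al * z)) (Set.Ici 0) :=
      hψ₁cont.mul ((Real.continuous_exp.comp (continuous_const.mul continuous_id)).continuousOn)
    refine intervalIntegral.integral_hasDerivAt_right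
      ((hfc.mono ?_).intervalIntegrable)
      (ContinuousOn.stronglyMeasurableAtFilter isOpen_Ioi
        (hfc.mono Set.Ioi_subset_Ici_self) x hx)
      ((hfc x hx.le).continuousAt (Ici_mem_nhds hx))
    rw [Set.uIcc_of_le hx.le]
    exact Set.Icc_subset_Ici_self
  -- Step A : 0 < ψ₁' d
  have hc₁pos : 0 < ψ₁' d := by
    rcases (aux_deriv_nonneg hd0 (hψ₁d d hd0) hψ₁mono).lt_or_eq with h | h
    · exact h
    exfalso
    have hψ₁'d0 : ψ₁' d = 0 := h.symm
    have hgd : u0 < g d := hgu d hd0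
    have heqd := hψ₁eq' d hd
    rw [hψ₁'d0, mul_zero] at heqd
    set Jd : ℝ := al * Real.exp (-al * d) * K₁ d with hJd
    -- strict inequality
    have hcontcomp : ContinuousOn (fun y => ψ₁ (d - y)) (Set.uIcc 0 d) := by
      rw [Set.uIcc_of_le hd0]
      refine hψ₁cont.comp ((continuous_const.sub continuous_id).continuousOn) ?_
      intro y hy
      simp only [Set.mem_Icc] at hy
      exact Set.mem_Ici.2 (by linarith [hy.2])
    have hcontexp : Continuous (fun y : ℝ => al * Real.exp (-al * y)) :=
      continuous_const.mul (Real.continuous_exp.comp (continuous_const.mul continuous_id))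
    have hint2 : IntervalIntegrable (fun y => ψ₁ (d - y) * (al * Real.exp (-al * y)))
        MeasureTheory.volume 0 d :=
      (hcontcomp.mul hcontexp.continuousOn).intervalIntegrable
    have hint1 : IntervalIntegrable (fun y => ψ₁ d * (al * Real.exp (-al * y)))
        MeasureTheory.volume 0 d :=
      (continuous_const.mul hcontexp).intervalIntegrable _ _
    have hpos : 0 < ∫ y in (0:ℝ)..d, (ψ₁ d - ψ₁ (d - y)) * (al * Real.exp (-al * y)) := by
      refine intervalIntegral.intervalIntegral_pos_of_pos_on
        (((continuousOn_const.sub hcontcomp).mul hcontexp.continuousOn).intervalIntegrable) ?_ hd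
      intro y hy
      have h2 : ψ₁ (d - y) < ψ₁ d :=
        hψ₁mono (Set.mem_Ici.2 (by linarith [hy.2])) (Set.mem_Ici.2 hd0) (by linarith [hy.1])
      exact mul_pos (sub_pos.2 h2) (mul_pos hal (Real.exp_pos _))
    have hsplit : (∫ y in (0:ℝ)..d, (ψ₁ d - ψ₁ (d - y)) * (al * Real.exp (-al * y)))
        = ψ₁ d * (1 - Real.exp (-al * d)) - Jd := by
      have hrw : (fun y => (ψ₁ d - ψ₁ (d - y)) * (al * Real.exp (-al * y)))
          = fun y => ψ₁ d * (al * Real.exp (-al * y)) - ψ₁ (d - y) * (al * Real.exp (-al * y)) := by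
        funext y; ring
      rw [hrw, intervalIntegral.integral_sub hint1 hint2,
        intervalIntegral.integral_const_mul, aux_expint, hJd, ← aux_sub al ψ₁ d]
    have hexpd : Real.exp (-al * d) < 1 := by
      rw [Real.exp_lt_one_iff]
      nlinarith
    have hexpd0 : 0 < Real.exp (-al * d) := Real.exp_pos _
    have h7 : 0 < ψ₁ d * (1 - Real.exp (-al * d)) - Jd := hsplit ▸ hpos
    have hψ₁dneg : ψ₁ d < 0 := by
      by_contra hcon
      push_neg at hcon
      have h8 : 0 < lam * (ψ₁ d * (1 - Real.exp (-al * d)) - Jd) := mul_pos hlam h7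
      have h9 : 0 ≤ ψ₁ d * (lam * Real.exp (-al * d)) := mul_nonneg hcon (by positivity)
      have h10 : 0 ≤ ψ₁ d * del := mul_nonneg hcon hdel.le
      nlinarith [h8, h9, h10, heqd]
    -- second derivative argument
    have hKd := hK₁deriv d hd
    have h1 : HasDerivAt (fun u => Real.exp (-al * u)) (-al * Real.exp (-al * d)) d :=
      aux_exp_deriv (-al) d
    have hnumderiv : HasDerivAt
        (fun u => (lam + del) * ψ₁ u - lam * (al * Real.exp (-al * u) * K₁ u))
        ((lam + del) * ψ₁' d
          - lam * ((al * (-al * Real.exp (-al * d))) * K₁ d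
            + (al * Real.exp (-al * d)) * (ψ₁ d * Real.exp (al * d)))) d :=
      ((hψ₁d d hd0).const_mul (lam + del)).sub
        (((h1.const_mul al).mul hKd).const_mul lam)
    have hgdpos : 0 < g d := lt_trans hu0 hgd
    have hq : HasDerivAt (fun u => ((lam + del) * ψ₁ u - lam * (al * Real.exp (-al * u) * K₁ u)) / g u)
        ((((lam + del) * ψ₁' d
          - lam * ((al * (-al * Real.exp (-al * d))) * K₁ d
            + (al * Real.exp (-al * d)) * (ψ₁ d * Real.exp (al * d)))) * g d
          - ((lam + del) * ψ₁ d - lam * (al * Real.exp (-al * d) * K₁ d)) * g' d) / (g d) ^ 2) d :=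
      hnumderiv.div (hg d hd0) (ne_of_gt hgdpos)
    have hev : ψ₁' =ᶠ[nhds d]
        fun u => ((lam + del) * ψ₁ u - lam * (al * Real.exp (-al * u) * K₁ u)) / g u := by
      filter_upwards [isOpen_Ioi.mem_nhds (Set.mem_Ioi.2 hd)] with u hu
      have h3 := hψ₁eq' u hu
      have h4 : g u ≠ 0 := ne_of_gt (lt_trans hu0 (hgu u (le_of_lt hu)))
      rw [eq_div_iff h4]
      linarith
    have hq' := hq.congr_of_eventuallyEq hev
    have hee : Real.exp (-al * d) * Real.exp (al * d) = 1 := by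
      rw [← Real.exp_add]; ring_nf; exact Real.exp_zero
    have hJval : lam * (al * Real.exp (-al * d) * K₁ d) = (lam + del) * ψ₁ d := by
      rw [hJd] at heqd; linarith
    have hnum0 : (lam + del) * ψ₁ d - lam * (al * Real.exp (-al * d) * K₁ d) = 0 := by
      linarith
    have hDneg : (((lam + del) * ψ₁' d
          - lam * ((al * (-al * Real.exp (-al * d))) * K₁ d
            + (al * Real.exp (-al * d)) * (ψ₁ d * Real.exp (al * d)))) * g d
          - ((lam + del) * ψ₁ d - lam * (al * Real.exp (-al * d) * K₁ d)) * g' d) / (g d) ^ 2 < 0 := by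
      rw [hnum0, zero_mul, sub_zero, hψ₁'d0]
      have hnum' : ((lam + del) * 0
          - lam * ((al * (-al * Real.exp (-al * d))) * K₁ d
            + (al * Real.exp (-al * d)) * (ψ₁ d * Real.exp (al * d)))) * g d
          = (al * del * ψ₁ d) * g d := by
        have h11 : (lam + del) * 0
            - lam * ((al * (-al * Real.exp (-al * d))) * K₁ d
              + (al * Real.exp (-al * d)) * (ψ₁ d * Real.exp (al * d)))
            = al * del * ψ₁ d := by
          linear_combination al * hJval - al * lam * ψ₁ d * hee
        rw [h11]
      rw [hnum']
      refine div_neg_of_neg_of_pos ?_ (by positivity)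
      exact mul_neg_of_neg_of_pos (mul_neg_of_pos_of_neg (mul_pos hal hdel) hψ₁dneg) hgdpos
    obtain ⟨y, hy1, hy2⟩ := aux_neg_right hq' hDneg hψ₁'d0
    exact absurd hy2 (not_lt.2 (aux_deriv_nonneg (by linarith) (hψ₁d y (by linarith)) hψ₁mono))
  have hc₁ : ψ₁' d ≠ 0 := ne_of_gt hc₁pos
  have hΨd_val : Ψ d = ψ₁ d / ψ₁' d := by
    rw [hΨ d, if_neg (lt_irrefl d)]
    linarith [hmatch]
  -- Step B : derivative of Ψ
  have hΨderiv : ∀ x ≥ d, HasDerivAt Ψ (ψ₂' x / ψ₂' d) x := by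
    intro x hx
    rcases eq_or_lt_of_le hx with heq | hlt
    · subst heq
      rw [div_self hc₂]
      have h1 : HasDerivWithinAt Ψ 1 (Set.Iic d) d := by
        have hb : HasDerivWithinAt (fun y => ψ₁ y / ψ₁' d) 1 (Set.Iic d) d := by
          have := ((hψ₁d d hd0).div_const (ψ₁' d)).hasDerivWithinAt (s := Set.Iic d)
          rwa [div_self hc₁] at this
        refine hb.congr (fun y hy => ?_) hΨd_val
        rcases lt_or_eq_of_le (Set.mem_Iic.1 hy) with h | h
        · rw [hΨ y, if_pos h]
        · subst h; exact hΨd_val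
      have h2 : HasDerivWithinAt Ψ 1 (Set.Ici d) d := by
        have hb : HasDerivWithinAt (fun y => u0 / del + ψ₂ y / ψ₂' d) 1 (Set.Ici d) d := by
          have := (((hψ₂d d hd0).div_const (ψ₂' d)).const_add (u0 / del)).hasDerivWithinAt
            (s := Set.Ici d)
          rwa [div_self hc₂] at this
        refine hb.congr (fun y hy => ?_) ?_
        · rw [hΨ y, if_neg (not_lt.2 (Set.mem_Ici.1 hy))]
        · rw [hΨ d, if_neg (lt_irrefl d)]
      have h3 := h1.union h2
      rw [Set.Iic_union_Ici] at h3
      exact hasDerivWithinAt_univ.mp h3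
    · have hx0 : (0:ℝ) ≤ x := le_trans hd0 hx
      have hb : HasDerivAt (fun y => u0 / del + ψ₂ y / ψ₂' d) (ψ₂' x / ψ₂' d) x :=
        ((hψ₂d x hx0).div_const _).const_add _
      refine hb.congr_of_eventuallyEq ?_
      filter_upwards [Ioi_mem_nhds hlt] with y hy
      rw [hΨ y, if_neg (not_lt.2 (le_of_lt hy))]
  -- continuity of Ψ
  have hΨcontAt : ∀ x > (0:ℝ), ContinuousAt Ψ x := by
    intro x hx
    rcases lt_trichotomy x d with h | h | h
    · refine ContinuousAt.congr (((hψ₁d x hx.le).continuousAt).div_const (ψ₁' d)) ?_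
      filter_upwards [Iio_mem_nhds h] with y hy
      rw [hΨ y, if_pos (Set.mem_Iio.1 hy)]
    · subst h
      exact (hΨderiv x le_rfl).continuousAt
    · have hb : ContinuousAt (fun y : ℝ => u0 / del + ψ₂ y / ψ₂' d) x :=
        continuousAt_const.add (((hψ₂d x hx.le).continuousAt).div_const (ψ₂' d))
      refine ContinuousAt.congr hb ?_
      filter_upwards [Ioi_mem_nhds h] with y hy
      rw [hΨ y, if_neg (not_lt.2 (le_of_lt hy))]
  have hΨcont : ContinuousOn Ψ (Set.Ici 0) := by
    intro y hy
    rcases (Set.mem_Ici.1 hy).lt_or_eq with h | h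
    · exact (hΨcontAt y h).continuousWithinAt
    · subst h
      have hb : ContinuousWithinAt (fun z : ℝ => ψ₁ z / ψ₁' d) (Set.Ici 0) 0 :=
        (hψ₁cont 0 Set.self_mem_Ici).div_const (ψ₁' d)
      refine hb.congr_of_eventuallyEq ?_ ?_
      · filter_upwards [mem_nhdsWithin_of_mem_nhds (Iio_mem_nhds hd)] with z hz
        rw [hΨ z, if_pos (Set.mem_Iio.1 hz)]
      · rw [hΨ 0, if_pos hd]
  -- FTC for K
  set K : ℝ → ℝ := fun u => ∫ z in (0:ℝ)..u, Ψ z * Real.exp (al * z) with hKdef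
  have hfcΨ : ContinuousOn (fun z => Ψ z * Real.exp (al * z)) (Set.Ici 0) :=
    hΨcont.mul ((Real.continuous_exp.comp (continuous_const.mul continuous_id)).continuousOn)
  have hΨK : ∀ x ≥ d, HasDerivAt K (Ψ x * Real.exp (al * x)) x := by
    intro x hx
    have hx0 : (0:ℝ) < x := lt_of_lt_of_le hd hx
    refine intervalIntegral.integral_hasDerivAt_right
      ((hfcΨ.mono ?_).intervalIntegrable)
      (ContinuousOn.stronglyMeasurableAtFilter isOpen_Ioi
        (hfcΨ.mono Set.Ioi_subset_Ici_self) x hx0)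
      ((hfcΨ x hx0.le).continuousAt (Ici_mem_nhds hx0))
    rw [Set.uIcc_of_le hx0.le]
    exact Set.Icc_subset_Ici_self
  -- the function G and its vanishing derivative
  set L : ℝ → ℝ := fun u => (g u - u0) * (ψ₂' u / ψ₂' d) - (lam + del) * Ψ u + u0 with hLdef
  set G : ℝ → ℝ := fun u => Real.exp (al * u) * L u + lam * al * K u with hGdef
  have hGd : ∀ t ≥ d, HasDerivAt G 0 t := by
    intro t ht
    have ht0 : (0:ℝ) < t := lt_of_lt_of_le hd ht
    have hexp : HasDerivAt (fun u => Real.exp (al * u)) (al * Real.exp (al * t)) t :=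
      aux_exp_deriv al t
    have hLd : HasDerivAt L
        (g' t * (ψ₂' t / ψ₂' d) + (g t - u0) * (ψ₂'' t / ψ₂' d)
          - (lam + del) * (ψ₂' t / ψ₂' d)) t :=
      ((((hg t ht0.le).sub_const u0).mul ((hψ₂d2 t ht0.le).div_const _)).sub
        ((hΨderiv t ht).const_mul _)).add_const u0
    have hGt : HasDerivAt G
        ((al * Real.exp (al * t) * L t
          + Real.exp (al * t) * (g' t * (ψ₂' t / ψ₂' d) + (g t - u0) * (ψ₂'' t / ψ₂' d)
            - (lam + del) * (ψ₂' t / ψ₂' d) * 1))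
          + lam * al * (Ψ t * Real.exp (al * t))) t := by
      have := (hexp.mul hLd).add ((hΨK t ht).const_mul (lam * al))
      exact this.congr_deriv (by ring)
    have hΨt : Ψ t = u0 / del + ψ₂ t / ψ₂' d := by
      rw [hΨ t, if_neg (not_lt.2 ht)]
    have key := hψ₂eq t ht0
    have hzero : (al * Real.exp (al * t) * L t
          + Real.exp (al * t) * (g' t * (ψ₂' t / ψ₂' d) + (g t - u0) * (ψ₂'' t / ψ₂' d)
            - (lam + del) * (ψ₂' t / ψ₂' d) * 1))
          + lam * al * (Ψ t * Real.exp (al * t)) = 0 := by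
      have hLt : L t = (g t - u0) * (ψ₂' t / ψ₂' d) - (lam + del) * Ψ t + u0 := rfl
      rw [hLt, hΨt]
      have hrw : (al * Real.exp (al * t) * ((g t - u0) * (ψ₂' t / ψ₂' d)
            - (lam + del) * (u0 / del + ψ₂ t / ψ₂' d) + u0)
          + Real.exp (al * t) * (g' t * (ψ₂' t / ψ₂' d) + (g t - u0) * (ψ₂'' t / ψ₂' d)
            - (lam + del) * (ψ₂' t / ψ₂' d) * 1))
          + lam * al * ((u0 / del + ψ₂ t / ψ₂' d) * Real.exp (al * t))
          = Real.exp (al * t) / ψ₂' d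
            * ((g t - u0) * ψ₂'' t + (al * (g t - u0) + g' t - (lam + del)) * ψ₂' t
              - al * del * ψ₂ t) := by
        field_simp
        ring
      rw [hrw, key, mul_zero]
    exact hGt.congr_deriv hzero
  have hGconst : ∀ x ≥ d, G x = G d := by
    intro x hx
    exact constant_of_has_deriv_right_zero
      (fun t ht => ((hGd t ht.1).continuousAt).continuousWithinAt)
      (fun t ht => (hGd t ht.1).hasDerivWithinAt)
      x (Set.mem_Icc.2 ⟨hx, le_rfl⟩)
  -- value at d
  have hKdval : K d = K₁ d / ψ₁' d := by
    have h1 : ∀ z ∈ Set.uIcc (0:ℝ) d,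
        Ψ z * Real.exp (al * z) = (ψ₁ z * Real.exp (al * z)) / ψ₁' d := by
      intro z hz
      rw [Set.uIcc_of_le hd0] at hz
      rcases lt_or_eq_of_le hz.2 with h | h
      · rw [hΨ z, if_pos h]; ring
      · subst h; rw [hΨd_val]; ring
    calc K d = ∫ z in (0:ℝ)..d, (ψ₁ z * Real.exp (al * z)) / ψ₁' d :=
          intervalIntegral.integral_congr h1
      _ = K₁ d / ψ₁' d := intervalIntegral.integral_div _ _
  have heed : Real.exp (al * d) * Real.exp (-al * d) = 1 := by
    rw [← Real.exp_add]; ring_nf; exact Real.exp_zero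
  have hGd0 : G d = 0 := by
    have heq := hψ₁eq' d hd
    have hGval : G d = Real.exp (al * d)
        * ((g d - u0) * (ψ₂' d / ψ₂' d) - (lam + del) * Ψ d + u0) + lam * al * K d := rfl
    rw [hGval, div_self hc₂, hΨd_val, hKdval]
    have h6 : Real.exp (al * d) * (g d * ψ₁' d)
        = Real.exp (al * d) * ((lam + del) * ψ₁ d - lam * (al * Real.exp (-al * d) * K₁ d)) := by
      rw [heq]
    field_simp
    linear_combination Real.exp (al * d) * heq - lam * al * K₁ d * heed
  -- conclusion
  intro x hx
  refine ⟨hΨderiv x hx, ?_⟩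
  rw [aux_sub al Ψ x]
  have hgx := hGconst x hx
  rw [hGd0] at hgx
  have hgx' : Real.exp (al * x) * ((g x - u0) * (ψ₂' x / ψ₂' d) - (lam + del) * Ψ x + u0)
      + lam * al * K x = 0 := hgx
  have hKx : (∫ z in (0:ℝ)..x, Ψ z * Real.exp (al * z)) = K x := rfl
  rw [hKx]
  have heex : Real.exp (al * x) * Real.exp (-al * x) = 1 := by
    rw [← Real.exp_add]; ring_nf; exact Real.exp_zero
  have h2 : Real.exp (al * x) * ((g x - u0) * (ψ₂' x / ψ₂' d) - (lam + del) * Ψ x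
      + lam * (al * Real.exp (-al * x) * K x) + u0) = 0 := by
    linear_combination hgx' + lam * al * K x * heex
  rcases mul_eq_zero.mp h2 with h | h
  · exact absurd h (ne_of_gt (Real.exp_pos _))
  · exact h
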